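/- Let $\kappa, \mu, b, \rho_s > 0$. There are only finitely many $n \in \mathbb{N}$ for which the polynomial $\mathcal{F}_n(\lambda) = \lambda^3 + \frac{1}{\kappa}\lambda^2 + \left(\frac{\mu}{\kappa\rho_s} + b\rho_s\right)n^2\lambda + \frac{b\rho_s}{\kappa}n^2$ has a repeated root. -/

import Mathlib

/-- There are only finitely many `n` for which `F_n` has a repeated root
(i.e. a common root of `F_n` and `F_n'`). -/
theorem stmt_6 (κ μ b ρs : ℝ) (hκ : 0 < κ) (hμ : 0 < μ) (hb : 0 < b) (hρs : 0 < ρs) :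
    {n : ℕ | ∃ lam : ℂ,
      lam ^ 3 + (1/(κ:ℂ)) * lam ^ 2
        + ((μ/(κ*ρs) + b*ρs : ℝ) : ℂ) * (n:ℂ)^2 * lam
        + ((b*ρs/κ : ℝ) : ℂ) * (n:ℂ)^2 = 0
      ∧ 3 * lam ^ 2 + (2/(κ:ℂ)) * lam
        + ((μ/(κ*ρs) + b*ρs : ℝ) : ℂ) * (n:ℂ)^2 = 0}.Finite := by
  have hκ0 : (κ:ℂ) ≠ 0 := by exact_mod_cast hκ.ne'
  have hρ0 : (ρs:ℂ) ≠ 0 := by exact_mod_cast hρs.ne'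
  obtain ⟨P, hP⟩ : ∃ P : ℝ, P = μ + b*κ*ρs^2 := ⟨_, rfl⟩
  have hPpos : 0 < P := by rw [hP]; positivity
  obtain ⟨N, hN⟩ : ∃ N : ℝ, N = |ρs*P - 9*b*κ*ρs^3| := ⟨_, rfl⟩
  have hN0 : 0 ≤ N := hN ▸ abs_nonneg _
  obtain ⟨K, hKdef⟩ : ∃ K : ℝ, K = N/(4*κ*ρs*P) := ⟨_, rfl⟩
  have hK0 : 0 ≤ K := by
    rw [hKdef]
    exact div_nonneg hN0 (by positivity)
  obtain ⟨M, hM⟩ : ∃ M : ℝ, M = ρs/(κ*P) + (3*κ*ρs*K^2 + 2*ρs*K)/P + 1 := ⟨_, rfl⟩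
  have ht1 : 0 ≤ ρs/(κ*P) := div_nonneg hρs.le (mul_pos hκ hPpos).le
  have ht2 : 0 ≤ (3*κ*ρs*K^2 + 2*ρs*K)/P :=
    div_nonneg (by positivity) hPpos.le
  have hM1 : 1 ≤ M := by rw [hM]; linarith
  apply Set.Finite.subset (Set.finite_Iic ⌈M⌉₊)
  intro n hn
  obtain ⟨lam, hF, hF'⟩ := hn
  simp only [Set.mem_Iic]
  by_contra hgt
  push_neg at hgt
  obtain ⟨m, hm⟩ : ∃ m : ℝ, m = (n:ℝ)^2 := ⟨_, rfl⟩
  have hmc : ((m:ℝ):ℂ) = (n:ℂ)^2 := by rw [hm]; push_cast; ring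
  have hnR : (⌈M⌉₊:ℝ) < (n:ℝ) := by exact_mod_cast hgt
  have hMceil : M ≤ (⌈M⌉₊:ℝ) := Nat.le_ceil M
  have hn1 : (1:ℝ) ≤ (n:ℝ) := by linarith
  have hmM : M < m := by
    have : (n:ℝ) ≤ m := by rw [hm]; nlinarith
    linarith
  have hmpos : 0 < m := by linarith
  -- clear denominators in the two root equations
  have e3 : (1/(κ:ℂ)) * (κ:ℂ) = 1 := by field_simp
  have e1 : ((μ/(κ*ρs) + b*ρs : ℝ):ℂ) * ((κ:ℂ)*(ρs:ℂ)) = ((P:ℝ):ℂ) := by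
    rw [hP]
    push_cast
    field_simp
  have e2 : ((b*ρs/κ : ℝ):ℂ) * ((κ:ℂ)*(ρs:ℂ)) = (b:ℂ)*(ρs:ℂ)^2 := by
    push_cast
    field_simp
  have hF2 : (κ:ℂ)*(ρs:ℂ)*lam^3 + (ρs:ℂ)*lam^2 + ((P:ℝ):ℂ)*((m:ℝ):ℂ)*lam
      + (b:ℂ)*(ρs:ℂ)^2*((m:ℝ):ℂ) = 0 := by
    rw [hmc]
    linear_combination ((κ:ℂ)*(ρs:ℂ))*hF - (ρs:ℂ)*lam^2*e3 - (n:ℂ)^2*lam*e1 - (n:ℂ)^2*e2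
  have hF'2 : 3*(κ:ℂ)*(ρs:ℂ)*lam^2 + 2*(ρs:ℂ)*lam + ((P:ℝ):ℂ)*((m:ℝ):ℂ) = 0 := by
    rw [hmc]
    linear_combination ((κ:ℂ)*(ρs:ℂ))*hF' - 2*(ρs:ℂ)*lam*e3 - (n:ℂ)^2*e1
  -- eliminate: 9κρs·F₂ - (3κρs·lam + ρs)·F₂' is linear in lam
  have key : ((6*κ*ρs*P*m - 2*ρs^2 : ℝ):ℂ) * lam = (((ρs*P - 9*b*κ*ρs^3)*m : ℝ):ℂ) := by
    push_cast
    linear_combination (9*(κ:ℂ)*(ρs:ℂ))*hF2 - (3*(κ:ℂ)*(ρs:ℂ)*lam + (ρs:ℂ))*hF'2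
  -- lower bound on the linear coefficient
  have hden : 4*(κ*ρs*P)*m ≤ 6*κ*ρs*P*m - 2*ρs^2 := by
    have h1 : ρs/(κ*P) < m := by linarith [hM ▸ hmM]
    have h2 : ρs ≤ κ*P*m := by
      rw [div_lt_iff₀ (mul_pos hκ hPpos)] at h1
      nlinarith
    nlinarith [hρs]
  have hdenpos : 0 < 6*κ*ρs*P*m - 2*ρs^2 := by
    have : 0 < 4*(κ*ρs*P)*m := by positivity
    linarith
  -- bound |lam|
  have habs : (6*κ*ρs*P*m - 2*ρs^2) * ‖lam‖ = N * m := by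
    have h1 := congrArg (‖·‖) key
    rw [norm_mul, Complex.norm_real, Complex.norm_real, Real.norm_eq_abs, Real.norm_eq_abs,
      abs_of_pos hdenpos, abs_mul, abs_of_pos hmpos, ← hN] at h1
    exact h1
  have hlamK : ‖lam‖ ≤ K := by
    rw [hKdef, le_div_iff₀ (by positivity : (0:ℝ) < 4*κ*ρs*P)]
    have h5 : 4*(κ*ρs*P)*m * ‖lam‖ ≤ N * m := by
      calc 4*(κ*ρs*P)*m * ‖lam‖
          ≤ (6*κ*ρs*P*m - 2*ρs^2) * ‖lam‖ :=
            mul_le_mul_of_nonneg_right hden (norm_nonneg lam)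
        _ = N * m := habs
    have h6 : (‖lam‖ * (4*κ*ρs*P)) * m ≤ N * m := by linarith [h5]
    exact le_of_mul_le_mul_right h6 hmpos
  -- from F' = 0, bound P*m
  have hF'3 : ((P*m : ℝ):ℂ) = -(((3*κ*ρs : ℝ):ℂ)*lam^2 + ((2*ρs : ℝ):ℂ)*lam) := by
    push_cast
    push_cast at hF'2
    linear_combination hF'2
  have habs2 : P*m ≤ 3*κ*ρs*K^2 + 2*ρs*K := by
    have h1 := congrArg (‖·‖) hF'3
    rw [Complex.norm_real, Real.norm_eq_abs, abs_of_pos (mul_pos hPpos hmpos), norm_neg] at h1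
    have t1 : ‖((3*κ*ρs : ℝ):ℂ)*lam^2‖ = (3*κ*ρs)*(‖lam‖)^2 := by
      rw [norm_mul, norm_pow, Complex.norm_real, Real.norm_eq_abs, abs_of_pos (by positivity)]
    have t2 : ‖((2*ρs : ℝ):ℂ)*lam‖ = (2*ρs)*(‖lam‖) := by
      rw [norm_mul, Complex.norm_real, Real.norm_eq_abs, abs_of_pos (by positivity)]
    have h2 : ‖((3*κ*ρs : ℝ):ℂ)*lam^2 + ((2*ρs : ℝ):ℂ)*lam‖
        ≤ 3*κ*ρs*K^2 + 2*ρs*K := by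
      calc ‖((3*κ*ρs : ℝ):ℂ)*lam^2 + ((2*ρs : ℝ):ℂ)*lam‖
          ≤ ‖((3*κ*ρs : ℝ):ℂ)*lam^2‖ + ‖((2*ρs : ℝ):ℂ)*lam‖ :=
            norm_add_le _ _
        _ = (3*κ*ρs)*(‖lam‖)^2 + (2*ρs)*(‖lam‖) := by rw [t1, t2]
        _ ≤ 3*κ*ρs*K^2 + 2*ρs*K := by
            have hx2 : (‖lam‖)^2 ≤ K^2 :=
              pow_le_pow_left₀ (norm_nonneg lam) hlamK 2
            have b1 : (3*κ*ρs)*(‖lam‖)^2 ≤ (3*κ*ρs)*K^2 :=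
              mul_le_mul_of_nonneg_left hx2 (by positivity)
            have b2 : (2*ρs)*(‖lam‖) ≤ (2*ρs)*K :=
              mul_le_mul_of_nonneg_left hlamK (by positivity)
            linarith
    linarith [h1.le.trans h2]
  have hfin : m ≤ (3*κ*ρs*K^2 + 2*ρs*K)/P := by
    rw [le_div_iff₀ hPpos]
    linarith [habs2]
  have := hM ▸ hmM
  linarith
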